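/- The set-valued map F on the circle S¹ defined by F(z) = {z², −z²} is positively expansive: there exists α > 0 such that for all z ≠ w in S¹ there is n ∈ ℕ with d_H(Fⁿ(z), Fⁿ(w)) > α. -/

import Mathlib

open Metric

/-- The set-valued map `F z = {z², -z²}` on the unit circle in `ℂ`. -/
noncomputable def FC : ℂ → Set ℂ := fun z => {z ^ 2, -z ^ 2}

/-- Iterates of the set-valued map `FC` starting from a set. -/
noncomputable def iterFC : ℕ → Set ℂ → Set ℂ
  | 0, K => K
  | n + 1, K => ⋃ y ∈ iterFC n K, FC y

lemma iterFC_succ_singleton (z : ℂ) (n : ℕ) :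
    iterFC (n + 1) {z} = {z ^ (2 ^ (n + 1)), -z ^ (2 ^ (n + 1))} := by
  induction n with
  | zero => simp [iterFC, FC]
  | succ n ih =>
    have h0 : iterFC (n + 2) {z} = ⋃ y ∈ iterFC (n + 1) {z}, FC y := rfl
    rw [h0, ih]
    have hpow2 : (z ^ (2 ^ (n + 1))) ^ 2 = z ^ (2 ^ (n + 2)) := by
      rw [← pow_mul]; ring_nf
    simp [FC, Set.biUnion_insert, Set.biUnion_singleton, neg_sq, hpow2]

lemma parall {a b : ℂ} (ha : ‖a‖ = 1) (hb : ‖b‖ = 1) :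
    ‖a - b‖ ^ 2 + ‖a + b‖ ^ 2 = 4 := by
  have h1 : ‖a - b‖ ^ 2 = Complex.normSq (a - b) := by
    exact (Complex.sq_norm _)
  have h2 : ‖a + b‖ ^ 2 = Complex.normSq (a + b) := by
    exact (Complex.sq_norm _)
  have ha' : Complex.normSq a = 1 := by
    rw [show Complex.normSq a = ‖a‖ ^ 2 from (Complex.sq_norm a).symm]
    rw [ha]; norm_num
  have hb' : Complex.normSq b = 1 := by
    rw [show Complex.normSq b = ‖b‖ ^ 2 from (Complex.sq_norm b).symm]
    rw [hb]; norm_num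
  rw [h1, h2]
  simp only [Complex.normSq_apply, Complex.sub_re, Complex.sub_im, Complex.add_re,
    Complex.add_im] at *
  nlinarith [ha', hb']

lemma keystep {p q A B : ℝ} (hp0 : 0 ≤ p) (hq0 : 0 ≤ q) (hB0 : 0 ≤ B)
    (hpq : p ^ 2 + q ^ 2 = 4) (hAB : A ^ 2 + B ^ 2 = 4) (hA : A = p * q)
    (hmn : min p q ≤ 1/2) : 3/2 * min p q ≤ min A B := by
  have hple : p ≤ 2 := by nlinarith
  have hqle : q ≤ 2 := by nlinarith
  have hA0 : 0 ≤ A := by rw [hA]; exact mul_nonneg hp0 hq0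
  have hA1 : A ≤ 1 := by
    rcases le_total p q with h | h
    · rw [min_eq_left h] at hmn; nlinarith
    · rw [min_eq_right h] at hmn; nlinarith
  have hBge : A ≤ B := by nlinarith
  rw [min_eq_left hBge, hA]
  rcases le_total p q with h | h
  · rw [min_eq_left h] at hmn ⊢
    have hq32 : (3/2:ℝ) ≤ q := by nlinarith
    nlinarith [mul_le_mul_of_nonneg_left hq32 hp0]
  · rw [min_eq_right h] at hmn ⊢
    have hp32 : (3/2:ℝ) ≤ p := by nlinarith
    nlinarith [mul_le_mul_of_nonneg_left hp32 hq0]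

noncomputable def mzw (z w : ℂ) (n : ℕ) : ℝ :=
  min ‖z ^ (2^n) - w ^ (2^n)‖ ‖z ^ (2^n) + w ^ (2^n)‖

/-- Core analytic lemma: the min-distance grows until it exceeds 1/2. -/
lemma core {z w : ℂ} (hz : ‖z‖ = 1) (hw : ‖w‖ = 1) (h1 : z ≠ w) (h2 : z ≠ -w) :
    ∃ n : ℕ, 1/2 < min ‖z ^ (2^n) - w ^ (2^n)‖ ‖z ^ (2^n) + w ^ (2^n)‖ := by
  by_contra hcon
  push_neg at hcon
  have hcon' : ∀ n, mzw z w n ≤ 1/2 := fun n => hcon n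
  have hm0 : 0 < mzw z w 0 := by
    have hzw : z - w ≠ 0 := sub_ne_zero.mpr h1
    have hzw' : z + w ≠ 0 := by
      intro h; apply h2; linear_combination h
    simp only [mzw, pow_zero, pow_one]
    exact lt_min (norm_pos_iff.mpr hzw) (norm_pos_iff.mpr hzw')
  have hgrow : ∀ n, (3/2 : ℝ) * mzw z w n ≤ mzw z w (n + 1) := by
    intro n
    have hna : ‖z ^ (2^n)‖ = 1 := by rw [norm_pow, hz, one_pow]
    have hnb : ‖w ^ (2^n)‖ = 1 := by rw [norm_pow, hw, one_pow]
    have ha2 : z ^ (2^(n+1)) = (z ^ (2^n)) ^ 2 := by rw [← pow_mul]; ring_nf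
    have hb2 : w ^ (2^(n+1)) = (w ^ (2^n)) ^ 2 := by rw [← pow_mul]; ring_nf
    have hpq : ‖z ^ (2^n) - w ^ (2^n)‖ ^ 2 + ‖z ^ (2^n) + w ^ (2^n)‖ ^ 2 = 4 :=
      parall hna hnb
    have hAB : ‖(z ^ (2^n)) ^ 2 - (w ^ (2^n)) ^ 2‖ ^ 2
        + ‖(z ^ (2^n)) ^ 2 + (w ^ (2^n)) ^ 2‖ ^ 2 = 4 := by
      apply parall <;> rw [norm_pow] <;> simp [hna, hnb]
    have hAval : ‖(z ^ (2^n)) ^ 2 - (w ^ (2^n)) ^ 2‖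
        = ‖z ^ (2^n) - w ^ (2^n)‖ * ‖z ^ (2^n) + w ^ (2^n)‖ := by
      rw [show (z ^ (2^n)) ^ 2 - (w ^ (2^n)) ^ 2
        = (z ^ (2^n) - w ^ (2^n)) * (z ^ (2^n) + w ^ (2^n)) by ring, norm_mul]
    have hmn : min ‖z ^ (2^n) - w ^ (2^n)‖ ‖z ^ (2^n) + w ^ (2^n)‖ ≤ 1/2 := hcon' n
    simp only [mzw, ha2, hb2]
    exact keystep (norm_nonneg _) (norm_nonneg _) (norm_nonneg _) hpq hAB hAval hmn
  have hpow : ∀ n, (3/2 : ℝ) ^ n * mzw z w 0 ≤ mzw z w n := by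
    intro n
    induction n with
    | zero => simp
    | succ n ih =>
      calc (3/2:ℝ) ^ (n+1) * mzw z w 0 = (3/2) * ((3/2)^n * mzw z w 0) := by ring
        _ ≤ (3/2) * mzw z w n := by nlinarith
        _ ≤ mzw z w (n + 1) := hgrow n
  obtain ⟨n, hn⟩ := pow_unbounded_of_one_lt ((1/2) / mzw z w 0) (by norm_num : (1:ℝ) < 3/2)
  have h1' : (1/2 : ℝ) < (3/2)^n * mzw z w 0 := by
    rw [div_lt_iff₀ hm0] at hn; linarith
  have h2' := hpow n
  have h3' := hcon' n
  linarith

theorem stmt6 : ∃ α : ℝ, 0 < α ∧ ∀ z w : ℂ, ‖z‖ = 1 → ‖w‖ = 1 → z ≠ w →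
    ∃ n : ℕ, α < hausdorffDist (iterFC n {z}) (iterFC n {w}) := by
  refine ⟨1/2, by norm_num, fun z w hz hw hne => ?_⟩
  have hlb : ∀ (A B : Set ℂ) (a : ℂ), a ∈ A → B.Nonempty → A.Finite → B.Finite →
      ∀ r : ℝ, (∀ y ∈ B, r ≤ dist a y) → r ≤ hausdorffDist A B := by
    intro A B a haA hB hAfin hBfin r hr
    have hne' : EMetric.hausdorffEdist A B ≠ ⊤ :=
      hausdorffEdist_ne_top_of_nonempty_of_bounded ⟨a, haA⟩ hB hAfin.isBounded hBfin.isBounded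
    rcases le_or_gt r 0 with hr0 | hr0
    · exact hr0.trans (hausdorffDist_nonneg)
    have hinf : r ≤ infDist a B := by
      have he : ENNReal.ofReal r ≤ Metric.infEDist a B := by
        rw [EMetric.le_infEdist]
        intro y hy
        rw [edist_dist]
        exact ENNReal.ofReal_le_ofReal (hr y hy)
      have := ENNReal.toReal_mono (infEdist_ne_top hB) he
      rwa [ENNReal.toReal_ofReal hr0.le] at this
    exact hinf.trans (infDist_le_hausdorffDist_of_mem haA hne')
  by_cases hzw : z = -w
  · refine ⟨0, ?_⟩
    have h2 : dist z w = 2 := by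
      rw [dist_eq_norm, hzw]
      rw [show -w - w = -(2 * w) by ring, norm_neg, norm_mul, hw]
      simp
    have := hlb {z} {w} z rfl ⟨w, rfl⟩ (Set.finite_singleton z) (Set.finite_singleton w)
      2 (by intro y hy; rw [Set.mem_singleton_iff] at hy; rw [hy, h2])
    calc (1/2 : ℝ) < 2 := by norm_num
      _ ≤ hausdorffDist (iterFC 0 {z}) (iterFC 0 {w}) := this
  · obtain ⟨n, hn⟩ := core hz hw hne hzw
    refine ⟨n, ?_⟩
    cases n with
    | zero =>
      simp only [pow_zero, pow_one] at hn
      show 1/2 < hausdorffDist ({z} : Set ℂ) ({w} : Set ℂ)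
      refine lt_of_lt_of_le hn (hlb {z} {w} z rfl ⟨w, rfl⟩ (Set.finite_singleton z)
        (Set.finite_singleton w) _ ?_)
      intro y hy; rw [Set.mem_singleton_iff] at hy; rw [hy]
      calc min ‖z - w‖ ‖z + w‖ ≤ ‖z - w‖ := min_le_left _ _
        _ = dist z w := (dist_eq_norm z w).symm
    | succ k =>
      set a := z ^ (2^(k+1)) with hA
      set b := w ^ (2^(k+1)) with hB
      have key : ∀ y ∈ ({b, -b} : Set ℂ), min ‖a - b‖ ‖a + b‖ ≤ dist a y := by
        rintro y (rfl | rfl)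
        · rw [dist_eq_norm]; exact min_le_left _ _
        · rw [dist_eq_norm, sub_neg_eq_add]; exact min_le_right _ _
      rw [iterFC_succ_singleton z k, iterFC_succ_singleton w k]
      refine lt_of_lt_of_le hn (hlb {a, -a} {b, -b} a (by left; rfl) ⟨b, by left; rfl⟩
        ((Set.finite_singleton (-a)).insert a) ((Set.finite_singleton (-b)).insert b) _ key)
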